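/- For any Boolean function b: \{0,1\}^n \to \{0,1\} and any single coordinate Y_i of the noisy output, I(b(X^n); Y_i) \le 1 - H(\alpha) holds; more generally the sum \sum_{i=1}^n I(b(X^n); Y_i) \le 1 - H(\alpha). -/

import Mathlib

open Finset

/-- `f2 x = -x log₂ x`, the summand of base-2 Shannon entropy. -/
noncomputable def f2 (x : ℝ) : ℝ := -x * Real.logb 2 x

/-- Binary entropy function `H(α)` (base 2). -/
noncomputable def binEnt (α : ℝ) : ℝ := f2 α + f2 (1 - α)

/-- Joint pmf of `(Xⁿ, Yⁿ)` where `Xⁿ` is i.i.d. Bernoulli(1/2) and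
`Yⁿ = Xⁿ ⊕ Zⁿ` with `Zⁿ` i.i.d. Bernoulli(α) (a memoryless BSC(α)). -/
noncomputable def jointP (n : ℕ) (α : ℝ) (x y : Fin n → Bool) : ℝ :=
  (1/2)^n * ∏ i, (if x i = y i then 1 - α else α)

/-- `Pr{b(Xⁿ) = u, Yⁿ = y}`. -/
noncomputable def pBY (n : ℕ) (α : ℝ) (b : (Fin n → Bool) → Bool) (u : Bool)
    (y : Fin n → Bool) : ℝ :=
  ∑ x : Fin n → Bool, if b x = u then jointP n α x y else 0

/-- `Pr{b(Xⁿ) = u}` for `Xⁿ` uniform on `{0,1}ⁿ`. -/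
noncomputable def pB (n : ℕ) (b : (Fin n → Bool) → Bool) (u : Bool) : ℝ :=
  ∑ x : Fin n → Bool, if b x = u then (1/2)^n else 0

/-- `H(b(Xⁿ))`, the entropy of the Boolean function's output. -/
noncomputable def HB (n : ℕ) (b : (Fin n → Bool) → Bool) : ℝ :=
  ∑ u : Bool, f2 (pB n b u)

/-- `Pr{b(Xⁿ) = 0 ∣ Yⁿ = y}` (note `Pr{Yⁿ = y} = 2⁻ⁿ` since `Yⁿ` is uniform;
`0` is encoded as `false`). -/
noncomputable def condP (n : ℕ) (α : ℝ) (b : (Fin n → Bool) → Bool)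
    (y : Fin n → Bool) : ℝ :=
  (2:ℝ)^n * pBY n α b false y

/-- The conditional entropy `H(b(Xⁿ) ∣ Yⁿ)`. -/
noncomputable def condHB (n : ℕ) (α : ℝ) (b : (Fin n → Bool) → Bool) : ℝ :=
  ∑ y : Fin n → Bool, (1/2)^n * ∑ u : Bool, f2 ((2:ℝ)^n * pBY n α b u y)

/-- The mutual information `I(b(Xⁿ); Yⁿ) = H(b(Xⁿ)) - H(b(Xⁿ) ∣ Yⁿ)`. -/
noncomputable def MI (n : ℕ) (α : ℝ) (b : (Fin n → Bool) → Bool) : ℝ :=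
  HB n b - condHB n α b

/-- `Pr{b(Xⁿ) = u, Y_i = v}`. -/
noncomputable def pBYi (n : ℕ) (α : ℝ) (b : (Fin n → Bool) → Bool) (i : Fin n)
    (u v : Bool) : ℝ :=
  ∑ x : Fin n → Bool,
    if b x = u then (1/2)^n * (if x i = v then 1 - α else α) else 0

/-- The single-coordinate mutual information
`I(b(Xⁿ); Y_i) = H(b(Xⁿ)) - H(b(Xⁿ) ∣ Y_i)` (note `Pr{Y_i = v} = 1/2`). -/
noncomputable def MIi (n : ℕ) (α : ℝ) (b : (Fin n → Bool) → Bool) (i : Fin n) : ℝ :=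
  HB n b - ∑ v : Bool, (1/2) * ∑ u : Bool, f2 (2 * pBYi n α b i u v)

lemma log2_pos : (0:ℝ) < Real.log 2 := Real.log_pos (by norm_num)

lemma f2_eq (x : ℝ) : f2 x = -(x * Real.log x) / Real.log 2 := by
  unfold f2 Real.logb; ring

lemma f2_zero : f2 0 = 0 := by simp [f2]
lemma f2_one : f2 1 = 0 := by simp [f2]

lemma f2_nonneg {x : ℝ} (h0 : 0 ≤ x) (h1 : x ≤ 1) : 0 ≤ f2 x := by
  rcases eq_or_lt_of_le h0 with h|h
  · simp [← h, f2_zero]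
  · have hl : Real.logb 2 x ≤ 0 := Real.logb_nonpos (by norm_num) h0 h1
    unfold f2; nlinarith

lemma f2_mul {x y : ℝ} (hx : 0 ≤ x) (hy : 0 ≤ y) :
    f2 (x * y) = x * f2 y + y * f2 x := by
  rcases eq_or_lt_of_le hx with h|h
  · simp [← h, f2_zero]
  rcases eq_or_lt_of_le hy with h'|h'
  · simp [← h', f2_zero]
  unfold f2 Real.logb
  rw [Real.log_mul (ne_of_gt h) (ne_of_gt h')]
  ring

lemma f2_two_mul {x : ℝ} (hx : 0 ≤ x) : f2 (2 * x) = 2 * f2 x - 2 * x := by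
  rw [f2_mul (by norm_num : (0:ℝ) ≤ 2) hx]
  have : f2 2 = -2 := by
    unfold f2; simp
  rw [this]; ring

lemma binEnt_eq (s : ℝ) :
    binEnt s = (-(s * Real.log s) - ((1-s) * Real.log (1-s))) / Real.log 2 := by
  unfold binEnt; rw [f2_eq, f2_eq]; ring

lemma binEnt_symm (s : ℝ) : binEnt (1 - s) = binEnt s := by
  unfold binEnt; rw [show (1:ℝ) - (1-s) = s by ring]; ring

lemma binEnt_nonneg {s : ℝ} (h0 : 0 ≤ s) (h1 : s ≤ 1) : 0 ≤ binEnt s :=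
  add_nonneg (f2_nonneg h0 h1) (f2_nonneg (by linarith) (by linarith))

lemma neg_mul_log_le {t : ℝ} (ht : 0 ≤ t) :
    -(t * Real.log t) ≤ 1/2 - t + t * Real.log 2 := by
  rcases eq_or_lt_of_le ht with h|h
  · rw [← h]; norm_num
  · have h2 : Real.log (1/(2*t)) ≤ 1/(2*t) - 1 :=
      Real.log_le_sub_one_of_pos (by positivity)
    have h3 : Real.log (1/(2*t)) = -(Real.log 2 + Real.log t) := by
      rw [one_div, Real.log_inv, Real.log_mul two_ne_zero (ne_of_gt h)]
    rw [h3] at h2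
    have h4 := mul_le_mul_of_nonneg_left h2 (le_of_lt h)
    have h5 : t * (1/(2*t) - 1) = 1/2 - t := by field_simp
    nlinarith

lemma binEnt_le_one {s : ℝ} (h0 : 0 ≤ s) (h1 : s ≤ 1) : binEnt s ≤ 1 := by
  rw [binEnt_eq, div_le_one log2_pos]
  have a1 := neg_mul_log_le h0
  have a2 := neg_mul_log_le (show (0:ℝ) ≤ 1 - s by linarith)
  nlinarith [log2_pos]

noncomputable def Gf (x : ℝ) : ℝ := 1 - binEnt ((1+x)/2)

lemma binEnt_half : binEnt (1/2 : ℝ) = 1 := by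
  have : f2 (1/2 : ℝ) = 1/2 := by
    unfold f2
    rw [show (1/2 : ℝ) = 2⁻¹ by norm_num, Real.logb_inv]
    simp
  unfold binEnt
  rw [show (1:ℝ) - 1/2 = 1/2 by norm_num, this]; norm_num

lemma Gf_zero : Gf 0 = 0 := by
  unfold Gf; rw [show ((1:ℝ)+0)/2 = 1/2 by norm_num, binEnt_half]; ring

lemma Gf_even (x : ℝ) : Gf (-x) = Gf x := by
  unfold Gf
  rw [show ((1:ℝ) + -x)/2 = 1 - (1+x)/2 by ring, binEnt_symm]

lemma Gf_nonneg {x : ℝ} (h0 : -1 ≤ x) (h1 : x ≤ 1) : 0 ≤ Gf x := by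
  have := binEnt_le_one (show (0:ℝ) ≤ (1+x)/2 by linarith) (by linarith)
  unfold Gf; linarith

lemma hasDerivAt_Gf {x : ℝ} (hx : x ∈ Set.Ioo (-1:ℝ) 1) :
    HasDerivAt Gf ((Real.log (1+x) - Real.log (1-x)) / (2 * Real.log 2)) x := by
  obtain ⟨hx1, hx2⟩ := hx
  have hp : (0:ℝ) < (1+x)/2 := by linarith
  have hm : (0:ℝ) < (1-x)/2 := by linarith
  have hGf : Gf = fun y => 1 + ((1+y)/2 * Real.log ((1+y)/2)) / Real.log 2
      + ((1-y)/2 * Real.log ((1-y)/2)) / Real.log 2 := by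
    funext y
    unfold Gf binEnt
    rw [f2_eq, f2_eq, show (1:ℝ) - (1+y)/2 = (1-y)/2 by ring]
    ring
  rw [hGf]
  have d1 : HasDerivAt (fun y : ℝ => (1+y)/2) (1/2) x := by
    simpa using ((hasDerivAt_id x).const_add 1).div_const 2
  have d2 : HasDerivAt (fun y : ℝ => (1-y)/2) (-(1/2)) x := by
    have := ((hasDerivAt_id x).neg.const_add 1).div_const 2
    simpa [sub_eq_add_neg, neg_div, one_div] using this
  have m1 : HasDerivAt (fun z : ℝ => z * Real.log z)
      (Real.log ((1+x)/2) + 1) ((1+x)/2) := Real.hasDerivAt_mul_log (ne_of_gt hp)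
  have m2 : HasDerivAt (fun z : ℝ => z * Real.log z)
      (Real.log ((1-x)/2) + 1) ((1-x)/2) := Real.hasDerivAt_mul_log (ne_of_gt hm)
  have c1 := (m1.comp x d1).div_const (Real.log 2)
  have c2 := (m2.comp x d2).div_const (Real.log 2)
  have := ((c1.const_add 1).add c2)
  refine this.congr_deriv ?_
  rw [Real.log_div (by linarith : (1:ℝ)+x ≠ 0) (two_ne_zero),
      Real.log_div (by linarith : (1:ℝ)-x ≠ 0) (two_ne_zero)]
  ring

lemma frac_mono {μ t : ℝ} (hμ0 : 0 ≤ μ) (hμ1 : μ ≤ 1) (ht0 : 0 ≤ t) (ht1 : t < 1) :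
    1/(1+μ*t) + 1/(1-μ*t) ≤ 1/(1+t) + 1/(1-t) := by
  have a : (0:ℝ) < 1 + t := by linarith
  have b : (0:ℝ) < 1 - t := by linarith
  have hμt0 : 0 ≤ μ * t := mul_nonneg hμ0 ht0
  have hμt1 : μ * t ≤ t := by nlinarith
  have c : (0:ℝ) < 1 + μ*t := by linarith
  have d : (0:ℝ) < 1 - μ*t := by linarith
  rw [div_add_div _ _ (ne_of_gt a) (ne_of_gt b), div_add_div _ _ (ne_of_gt c) (ne_of_gt d)]
  rw [div_le_div_iff₀ (by positivity) (by positivity)]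
  nlinarith [sq_nonneg t, sq_nonneg (μ*t), mul_nonneg hμt0 ht0]

lemma L_bound {μ x : ℝ} (hμ0 : 0 ≤ μ) (hμ1 : μ ≤ 1) (hx0 : 0 ≤ x) (hx1 : x < 1) :
    Real.log (1+μ*x) - Real.log (1-μ*x) ≤ μ * (Real.log (1+x) - Real.log (1-x)) := by
  set E : ℝ → ℝ := fun t =>
    μ * (Real.log (1+t) - Real.log (1-t)) - (Real.log (1+μ*t) - Real.log (1-μ*t)) with hE
  have hasD : ∀ t ∈ Set.Ioo (0:ℝ) 1, HasDerivAt E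
      (μ * (1/(1+t) - (-1)/(1-t)) - ((μ*1)/(1+μ*t) - (-(μ*1))/(1-μ*t))) t := by
    intro t ht
    obtain ⟨ht0, ht1⟩ := ht
    have a : (0:ℝ) < 1 + t := by linarith
    have b : (0:ℝ) < 1 - t := by linarith
    have hμt1 : μ * t ≤ t := by nlinarith
    have c : (0:ℝ) < 1 + μ*t := by nlinarith
    have d : (0:ℝ) < 1 - μ*t := by linarith
    have l1 : HasDerivAt (fun t : ℝ => Real.log (1+t)) (1/(1+t)) t := by
      have := (((hasDerivAt_id t).const_add 1).log (ne_of_gt a))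
      simpa using this
    have l2 : HasDerivAt (fun t : ℝ => Real.log (1-t)) ((-1)/(1-t)) t :=
      ((hasDerivAt_id t).const_sub 1).log (ne_of_gt b)
    have l3 : HasDerivAt (fun t : ℝ => Real.log (1+μ*t)) ((μ*1)/(1+μ*t)) t :=
      (((hasDerivAt_id t).const_mul μ).const_add 1).log (ne_of_gt c)
    have l4 : HasDerivAt (fun t : ℝ => Real.log (1-μ*t)) ((-(μ*1))/(1-μ*t)) t := by
      have := (((hasDerivAt_id t).const_mul μ).const_sub 1).log (ne_of_gt d)
      simpa using this
    exact ((l1.sub l2).const_mul μ).sub (l3.sub l4)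
  have cont : ContinuousOn E (Set.Ico 0 1) := by
    have c1 : ContinuousOn (fun t : ℝ => Real.log (1+t)) (Set.Ico (0:ℝ) 1) :=
      ContinuousOn.log (by fun_prop) (fun t ht => by have := ht.1; positivity)
    have c2 : ContinuousOn (fun t : ℝ => Real.log (1-t)) (Set.Ico (0:ℝ) 1) :=
      ContinuousOn.log (by fun_prop) (fun t ht => by
        obtain ⟨h1, h2⟩ := ht; have : (0:ℝ) < 1 - t := by linarith
        exact ne_of_gt this)
    have c3 : ContinuousOn (fun t : ℝ => Real.log (1+μ*t)) (Set.Ico (0:ℝ) 1) :=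
      ContinuousOn.log (by fun_prop) (fun t ht => by
        have h1 := ht.1; have : (0:ℝ) < 1 + μ*t := by nlinarith
        exact ne_of_gt this)
    have c4 : ContinuousOn (fun t : ℝ => Real.log (1-μ*t)) (Set.Ico (0:ℝ) 1) :=
      ContinuousOn.log (by fun_prop) (fun t ht => by
        obtain ⟨h1, h2⟩ := ht
        have hμt1 : μ * t ≤ t := by nlinarith
        have : (0:ℝ) < 1 - μ*t := by linarith
        exact ne_of_gt this)
    exact (((c1.sub c2).const_smul μ).sub (c3.sub c4)).congr (fun t _ => by simp [hE])
  have mono : MonotoneOn E (Set.Ico 0 1) := by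
    apply monotoneOn_of_deriv_nonneg (convex_Ico 0 1) cont
    · intro t ht
      rw [interior_Ico] at ht
      exact ((hasD t ht).differentiableAt).differentiableWithinAt
    · intro t ht
      rw [interior_Ico] at ht
      rw [(hasD t ht).deriv]
      have a : (0:ℝ) < 1 + t := by linarith [ht.1]
      have b : (0:ℝ) < 1 - t := by linarith [ht.2]
      have h := frac_mono hμ0 hμ1 (le_of_lt ht.1) ht.2
      have h2 := mul_le_mul_of_nonneg_left h hμ0
      ring_nf
      ring_nf at h2
      nlinarith [h2]
  have E0 : E 0 = 0 := by simp [hE]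
  have := mono (Set.mem_Ico.2 ⟨le_refl 0, by norm_num⟩) (Set.mem_Ico.2 ⟨hx0, hx1⟩) hx0
  rw [E0] at this
  simp only [hE] at this
  linarith

lemma continuous_Gf : Continuous Gf := by
  have hf2 : Continuous f2 := by
    have : f2 = fun x => -(x * Real.log x) / Real.log 2 := funext f2_eq
    rw [this]
    exact Real.continuous_mul_log.neg.div_const _
  unfold Gf binEnt
  exact (continuous_const.sub (((hf2.comp (by fun_prop))).add (hf2.comp (by fun_prop))))

lemma Gf_sq_bound {ρ μ : ℝ} (hρ0 : 0 ≤ ρ) (hρ1 : ρ ≤ 1) (hμ0 : 0 ≤ μ) (hμ1 : μ ≤ 1) :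
    Gf (μ * ρ) ≤ μ^2 * Gf ρ := by
  set D : ℝ → ℝ := fun x => μ^2 * Gf x - Gf (μ * x) with hD
  have hasD : ∀ x ∈ Set.Ioo (0:ℝ) 1, HasDerivAt D
      (μ^2 * ((Real.log (1+x) - Real.log (1-x)) / (2 * Real.log 2))
        - ((Real.log (1+μ*x) - Real.log (1-μ*x)) / (2 * Real.log 2)) * (μ * 1)) x := by
    intro x hx
    obtain ⟨hx0, hx1⟩ := hx
    have hμx : μ * x ∈ Set.Ioo (-1:ℝ) 1 := by
      constructor
      · nlinarith
      · nlinarith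
    have g1 := (hasDerivAt_Gf (Set.mem_Ioo.2 ⟨by linarith, hx1⟩)).const_mul (μ^2)
    have g2 := (hasDerivAt_Gf hμx).comp x ((hasDerivAt_id x).const_mul μ)
    exact g1.sub g2
  have contC : Continuous (fun x : ℝ => Gf (μ * x)) :=
    continuous_Gf.comp (continuous_const.mul continuous_id)
  have cont : ContinuousOn D (Set.Icc 0 1) :=
    ((continuous_const.mul continuous_Gf).sub contC).continuousOn
  have mono : MonotoneOn D (Set.Icc 0 1) := by
    apply monotoneOn_of_deriv_nonneg (convex_Icc 0 1) cont
    · intro x hx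
      rw [interior_Icc] at hx
      exact ((hasD x hx).differentiableAt).differentiableWithinAt
    · intro x hx
      rw [interior_Icc] at hx
      rw [(hasD x hx).deriv]
      have h := L_bound hμ0 hμ1 (le_of_lt hx.1) hx.2
      have h2 := mul_le_mul_of_nonneg_left h hμ0
      have hrw : μ^2 * ((Real.log (1+x) - Real.log (1-x)) / (2 * Real.log 2))
          - ((Real.log (1+μ*x) - Real.log (1-μ*x)) / (2 * Real.log 2)) * (μ * 1)
          = (μ * (μ * (Real.log (1+x) - Real.log (1-x)))
              - μ * (Real.log (1+μ*x) - Real.log (1-μ*x))) / (2 * Real.log 2) := by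
        ring
      rw [hrw]
      apply div_nonneg (by linarith) (by linarith [log2_pos])
  have D0 : D 0 = 0 := by simp [hD, Gf_zero]
  have := mono (Set.mem_Icc.2 ⟨le_refl 0, by linarith⟩) (Set.mem_Icc.2 ⟨hρ0, hρ1⟩) hρ0
  rw [D0] at this
  simp only [hD] at this
  linarith

lemma Gf_sq_bound' {ρ μ : ℝ} (hρ0 : 0 ≤ ρ) (hρ1 : ρ ≤ 1) (hμ : -1 ≤ μ) (hμ1 : μ ≤ 1) :
    Gf (ρ * μ) ≤ μ^2 * Gf ρ := by
  rcases le_or_gt 0 μ with h | h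
  · rw [mul_comm]; exact Gf_sq_bound hρ0 hρ1 h hμ1
  · have h1 : Gf (ρ * μ) = Gf ((-μ) * ρ) := by
      rw [show ρ * μ = -((-μ) * ρ) by ring, Gf_even]
    rw [h1, show μ^2 = (-μ)^2 by ring]
    exact Gf_sq_bound hρ0 hρ1 (by linarith) (by linarith)

noncomputable def Av (n : ℕ) (b : (Fin n → Bool) → Bool) (u : Bool) (i : Fin n) : ℝ :=
  ∑ x : Fin n → Bool, if b x = u ∧ x i = false then ((1:ℝ)/2)^n else 0

def flipPerm (n : ℕ) (i : Fin n) : Equiv.Perm (Fin n → Bool) :=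
  Function.Involutive.toPerm (fun x => Function.update x i (!(x i))) (by
    intro x; funext j
    rcases eq_or_ne j i with rfl | h
    · simp
    · simp [Function.update_of_ne h])

lemma flipPerm_apply (n : ℕ) (i : Fin n) (x : Fin n → Bool) :
    flipPerm n i x = Function.update x i (!(x i)) := rfl

lemma flipPerm_apply_self (n : ℕ) (i : Fin n) (x : Fin n → Bool) :
    flipPerm n i x i = !(x i) := by simp [flipPerm_apply]

lemma flipPerm_apply_ne (n : ℕ) (i j : Fin n) (h : j ≠ i) (x : Fin n → Bool) :
    flipPerm n i x j = x j := by simp [flipPerm_apply, Function.update_of_ne h]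

lemma sum_chi_zero (n : ℕ) (i : Fin n) :
    ∑ x : Fin n → Bool, (if x i = false then (1:ℝ) else -1) = 0 := by
  set S := ∑ x : Fin n → Bool, (if x i = false then (1:ℝ) else -1) with hS
  have h := Equiv.sum_comp (flipPerm n i) (fun x => if x i = false then (1:ℝ) else -1)
  have h2 : ∑ x : Fin n → Bool, (if (flipPerm n i x) i = false then (1:ℝ) else -1)
      = ∑ x : Fin n → Bool, -(if x i = false then (1:ℝ) else -1) := by
    apply Finset.sum_congr rfl
    intro x _
    rw [flipPerm_apply_self]
    cases hx : x i <;> simp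
  rw [h2] at h
  rw [Finset.sum_neg_distrib] at h
  have : -S = S := h
  linarith

lemma sum_chi_mul_chi (n : ℕ) {i j : Fin n} (hij : i ≠ j) :
    ∑ x : Fin n → Bool,
      ((if x i = false then (1:ℝ) else -1) * (if x j = false then (1:ℝ) else -1)) = 0 := by
  set S := ∑ x : Fin n → Bool,
      ((if x i = false then (1:ℝ) else -1) * (if x j = false then (1:ℝ) else -1)) with hS
  have h := Equiv.sum_comp (flipPerm n j)
    (fun x => (if x i = false then (1:ℝ) else -1) * (if x j = false then (1:ℝ) else -1))
  have h2 : ∑ x : Fin n → Bool,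
      ((if (flipPerm n j x) i = false then (1:ℝ) else -1) *
        (if (flipPerm n j x) j = false then (1:ℝ) else -1))
      = ∑ x : Fin n → Bool,
        -((if x i = false then (1:ℝ) else -1) * (if x j = false then (1:ℝ) else -1)) := by
    apply Finset.sum_congr rfl
    intro x _
    rw [flipPerm_apply_self, flipPerm_apply_ne n j i hij]
    cases hx : x j <;> simp
  rw [h2, Finset.sum_neg_distrib] at h
  have : -S = S := h
  linarith

lemma sum_card (n : ℕ) : ∑ _x : Fin n → Bool, ((1:ℝ)/2)^n = 1 := by
  rw [Finset.sum_const, Finset.card_univ, Fintype.card_fun, Fintype.card_bool,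
    Fintype.card_fin, nsmul_eq_mul]
  push_cast
  rw [← mul_pow]
  norm_num

lemma parseval (n : ℕ) (b : (Fin n → Bool) → Bool) (u : Bool) :
    ∑ i : Fin n, (2 * Av n b u i - pB n b u)^2 ≤ pB n b u * (1 - pB n b u) := by
  classical
  set c : ℝ := ((1:ℝ)/2)^n with hc
  have hc0 : 0 ≤ c := by positivity
  set g : (Fin n → Bool) → ℝ := fun x => if b x = u then (1:ℝ) else 0 with hg
  set χ : Fin n → (Fin n → Bool) → ℝ := fun i x => if x i = false then (1:ℝ) else -1 with hχ
  set p : ℝ := pB n b u with hp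
  set w : Fin n → ℝ := fun i => 2 * Av n b u i - pB n b u with hw
  set s : (Fin n → Bool) → ℝ := fun x => ∑ i, w i * χ i x with hs
  -- base facts
  have hpg : p = ∑ x, c * g x := by
    rw [hp, pB]
    exact Finset.sum_congr rfl fun x _ => by by_cases h : b x = u <;> simp [hg, h, hc]
  have hg2 : ∀ x, g x ^ 2 = g x := fun x => by by_cases h : b x = u <;> simp [hg, h]
  have hwx : ∀ i, w i = ∑ x, c * (g x * χ i x) := by
    intro i
    rw [hw]
    show 2 * Av n b u i - pB n b u = _
    rw [Av, pB, Finset.mul_sum, ← Finset.sum_sub_distrib]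
    apply Finset.sum_congr rfl
    intro x _
    by_cases hb : b x = u <;> cases hxi : x i <;> simp [hg, hχ, hb, hxi, hc] <;> ring
  have hs1 : ∑ x : Fin n → Bool, c = 1 := sum_card n
  have hchi : ∀ i, ∑ x, c * χ i x = 0 := by
    intro i
    rw [← Finset.mul_sum, sum_chi_zero]
    ring
  have hchi2 : ∀ i j : Fin n, ∑ x, c * (χ i x * χ j x) = if i = j then 1 else 0 := by
    intro i j
    rcases eq_or_ne i j with rfl | hij
    · have : ∀ x : Fin n → Bool, χ i x * χ i x = 1 := fun x => by
        by_cases h : x i = false <;> simp [hχ, h]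
      simp only [this, mul_one]
      rw [hs1]
      simp
    · rw [← Finset.mul_sum, sum_chi_mul_chi n hij, if_neg hij]
      ring
  -- sums with s
  have hSs : ∑ x, c * s x = 0 := by
    have e1 : ∀ x : Fin n → Bool, c * s x = ∑ i, w i * (c * χ i x) := by
      intro x
      rw [hs]
      show c * ∑ i, w i * χ i x = _
      rw [Finset.mul_sum]
      exact Finset.sum_congr rfl fun i _ => by ring
    rw [Finset.sum_congr rfl fun x _ => e1 x, Finset.sum_comm]
    have : ∀ i : Fin n, ∑ x, w i * (c * χ i x) = 0 := by
      intro i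
      rw [← Finset.mul_sum, hchi i, mul_zero]
    rw [Finset.sum_congr rfl fun i _ => this i, Finset.sum_const, smul_zero]
  have hSgs : ∑ x, c * (g x * s x) = ∑ i, w i ^ 2 := by
    have e1 : ∀ x : Fin n → Bool, c * (g x * s x) = ∑ i, w i * (c * (g x * χ i x)) := by
      intro x
      rw [hs]
      show c * (g x * ∑ i, w i * χ i x) = _
      rw [Finset.mul_sum, Finset.mul_sum]
      exact Finset.sum_congr rfl fun i _ => by ring
    rw [Finset.sum_congr rfl fun x _ => e1 x, Finset.sum_comm]
    apply Finset.sum_congr rfl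
    intro i _
    rw [← Finset.mul_sum, ← hwx i, sq]
  have hSss : ∑ x, c * s x ^ 2 = ∑ i, w i ^ 2 := by
    have e1 : ∀ x : Fin n → Bool, c * s x ^ 2
        = ∑ i, ∑ j, (w i * w j) * (c * (χ i x * χ j x)) := by
      intro x
      rw [hs]
      show c * (∑ i, w i * χ i x) ^ 2 = _
      rw [sq, Finset.sum_mul_sum]
      rw [Finset.mul_sum]
      apply Finset.sum_congr rfl
      intro i _
      rw [Finset.mul_sum]
      exact Finset.sum_congr rfl fun j _ => by ring
    rw [Finset.sum_congr rfl fun x _ => e1 x, Finset.sum_comm]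
    apply Finset.sum_congr rfl
    intro i _
    rw [Finset.sum_comm]
    have e2 : ∀ j : Fin n, ∑ x, (w i * w j) * (c * (χ i x * χ j x))
        = if i = j then w i * w j else 0 := by
      intro j
      rw [← Finset.mul_sum, hchi2 i j]
      by_cases h : i = j <;> simp [h]
    rw [Finset.sum_congr rfl fun j _ => e2 j, Finset.sum_ite_eq]
    simp [sq]
  have hSg2 : ∑ x, c * g x ^ 2 = p := by
    rw [hpg]
    exact Finset.sum_congr rfl fun x _ => by rw [hg2]
  -- main expansion
  have h0 : (0:ℝ) ≤ ∑ x, c * (g x - p - s x)^2 :=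
    Finset.sum_nonneg fun x _ => mul_nonneg hc0 (sq_nonneg _)
  have hsplit : ∑ x, c * (g x - p - s x)^2
      = (∑ x, c * g x ^ 2) - 2*p*(∑ x, c * g x) + p^2 * (∑ x : Fin n → Bool, c)
        - 2*(∑ x, c * (g x * s x)) + 2*p*(∑ x, c * s x) + (∑ x, c * s x ^ 2) := by
    have e : ∀ x ∈ (univ : Finset (Fin n → Bool)), c * (g x - p - s x)^2
        = c * g x ^ 2 - 2*p*(c * g x) + p^2 * c - 2*(c * (g x * s x))
          + 2*p*(c * s x) + c * s x ^ 2 := fun x _ => by ring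
    rw [Finset.sum_congr rfl e]
    simp only [Finset.sum_add_distrib, Finset.sum_sub_distrib, ← Finset.mul_sum]
  rw [hsplit, hSg2, ← hpg, hs1, hSgs, hSs, hSss] at h0
  have : ∀ i : Fin n, (2 * Av n b u i - pB n b u)^2 = w i ^ 2 := fun i => by rw [hw]
  rw [Finset.sum_congr rfl fun i _ => this i]
  nlinarith [h0]



lemma pB_nonneg (n : ℕ) (b : (Fin n → Bool) → Bool) (u : Bool) : 0 ≤ pB n b u :=
  Finset.sum_nonneg fun x _ => by by_cases h : b x = u <;> simp [h] <;> positivity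

lemma pB_sum (n : ℕ) (b : (Fin n → Bool) → Bool) :
    pB n b false + pB n b true = 1 := by
  rw [pB, pB, ← Finset.sum_add_distrib]
  rw [Finset.sum_congr rfl (fun x _ =>
    show _ = ((1:ℝ)/2)^n from by cases h : b x <;> simp [h])]
  exact sum_card n

lemma Av_nonneg (n : ℕ) (b : (Fin n → Bool) → Bool) (u : Bool) (i : Fin n) :
    0 ≤ Av n b u i :=
  Finset.sum_nonneg fun x _ => by
    by_cases h : b x = u ∧ x i = false <;> simp [h] <;> positivity

lemma Av_le_pB (n : ℕ) (b : (Fin n → Bool) → Bool) (u : Bool) (i : Fin n) :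
    Av n b u i ≤ pB n b u := by
  apply Finset.sum_le_sum
  intro x _
  by_cases h : b x = u
  · by_cases h2 : x i = false <;> simp [h, h2] <;> positivity
  · simp [h]

lemma pBYi_nonneg (n : ℕ) (α : ℝ) (b : (Fin n → Bool) → Bool) (i : Fin n) (u v : Bool)
    (hα0 : 0 ≤ α) (hα1 : α ≤ 1) : 0 ≤ pBYi n α b i u v :=
  Finset.sum_nonneg fun x _ => by
    by_cases h : b x = u
    · rw [if_pos h]
      by_cases h2 : x i = v
      · rw [if_pos h2]
        have h3 : 0 ≤ 1 - α := by linarith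
        positivity
      · rw [if_neg h2]
        positivity
    · rw [if_neg h]

lemma pBYi_false (n : ℕ) (α : ℝ) (b : (Fin n → Bool) → Bool) (i : Fin n) (u : Bool) :
    pBYi n α b i u false = α * pB n b u + (1 - 2*α) * Av n b u i := by
  rw [pBYi, pB, Av, Finset.mul_sum, Finset.mul_sum, ← Finset.sum_add_distrib]
  apply Finset.sum_congr rfl
  intro x _
  by_cases hb : b x = u <;> cases hxi : x i <;> simp [hb, hxi] <;> ring

lemma pBYi_true (n : ℕ) (α : ℝ) (b : (Fin n → Bool) → Bool) (i : Fin n) (u : Bool) :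
    pBYi n α b i u true = pB n b u - pBYi n α b i u false := by
  rw [pBYi, pBYi, pB, ← Finset.sum_sub_distrib]
  apply Finset.sum_congr rfl
  intro x _
  by_cases hb : b x = u <;> cases hxi : x i <;> simp [hb, hxi] <;> ring

lemma MIi_eq (n : ℕ) (α : ℝ) (b : (Fin n → Bool) → Bool) (i : Fin n)
    (hα0 : 0 ≤ α) (hα1 : α ≤ 1) :
    MIi n α b i =
      (f2 (pB n b false) + pB n b false
        - f2 (pBYi n α b i false false) - f2 (pBYi n α b i false true))
      + (f2 (pB n b true) + pB n b true
        - f2 (pBYi n α b i true false) - f2 (pBYi n α b i true true)) := by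
  have hq : ∀ u v, 0 ≤ pBYi n α b i u v := fun u v => pBYi_nonneg n α b i u v hα0 hα1
  unfold MIi HB
  rw [Fintype.sum_bool, Fintype.sum_bool, Fintype.sum_bool, Fintype.sum_bool]
  rw [f2_two_mul (hq _ _), f2_two_mul (hq _ _), f2_two_mul (hq _ _), f2_two_mul (hq _ _)]
  have h1 := pBYi_true n α b i false
  have h2 := pBYi_true n α b i true
  have h3 := pB_sum n b
  linarith

lemma T_props (n : ℕ) (α : ℝ) (b : (Fin n → Bool) → Bool)
    (hα0 : 0 ≤ α) (hα2 : α ≤ 1/2) (u : Bool) (i : Fin n) :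
    0 ≤ f2 (pB n b u) + pB n b u
        - f2 (pBYi n α b i u false) - f2 (pBYi n α b i u true)
    ∧ f2 (pB n b u) + pB n b u
        - f2 (pBYi n α b i u false) - f2 (pBYi n α b i u true)
      ≤ (if pB n b u = 0 then 0 else
          Gf (1-2*α) * ((2 * Av n b u i - pB n b u)^2 / pB n b u)) := by
  have hρ0 : (0:ℝ) ≤ 1 - 2*α := by linarith
  have hρ1 : (1:ℝ) - 2*α ≤ 1 := by linarith
  have hp0 := pB_nonneg n b u
  have hA0 := Av_nonneg n b u i
  have hAp := Av_le_pB n b u i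
  rcases eq_or_lt_of_le hp0 with hp | hp
  · have hA : Av n b u i = 0 := le_antisymm (by linarith) hA0
    have h0 : pBYi n α b i u false = 0 := by
      rw [pBYi_false, hA, ← hp]; ring
    have h1 : pBYi n α b i u true = 0 := by
      rw [pBYi_true, h0, ← hp]; ring
    rw [h0, h1, ← hp, f2_zero, if_pos rfl]
    norm_num
  · rw [if_neg (ne_of_gt hp)]
    set p := pB n b u with hpdef
    set A := Av n b u i with hAdef
    set μ : ℝ := (2*A - p)/p with hμdef
    have hμ1 : μ ≤ 1 := by
      rw [hμdef, div_le_one hp]; linarith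
    have hμ2 : -1 ≤ μ := by
      rw [hμdef, le_div_iff₀ hp]; linarith
    set s : ℝ := (1 + (1-2*α)*μ)/2 with hsdef
    have hρμ1 : (1-2*α)*μ ≤ 1 := by nlinarith
    have hρμ2 : -1 ≤ (1-2*α)*μ := by nlinarith
    have hs0 : 0 ≤ s := by rw [hsdef]; linarith
    have hs1 : s ≤ 1 := by rw [hsdef]; linarith
    have hq0 : pBYi n α b i u false = p * s := by
      rw [pBYi_false, hsdef, hμdef, ← hAdef, ← hpdef]
      field_simp
      ring
    have hq1 : pBYi n α b i u true = p * (1 - s) := by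
      rw [pBYi_true, hq0]; ring
    rw [hq0, hq1, f2_mul hp0 hs0, f2_mul hp0 (by linarith)]
    have hT : f2 p + p - (p * f2 s + s * f2 p) - (p * f2 (1-s) + (1-s) * f2 p)
        = p * Gf ((1-2*α) * μ) := by
      have : Gf ((1-2*α)*μ) = 1 - binEnt s := by
        rw [Gf, hsdef]
      rw [this, binEnt]
      ring
    constructor
    · have hg := Gf_nonneg hρμ2 hρμ1
      nlinarith [hT]
    · have hkey := Gf_sq_bound' hρ0 hρ1 hμ2 hμ1
      have h2 := mul_le_mul_of_nonneg_left hkey hp0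
      have hfin : p * (μ^2 * Gf (1-2*α)) = Gf (1-2*α) * ((2*A - p)^2 / p) := by
        rw [hμdef]
        field_simp
      nlinarith [hT]

lemma Gf_rho (α : ℝ) : Gf (1-2*α) = 1 - binEnt α := by
  rw [Gf, show ((1:ℝ)+(1-2*α))/2 = 1 - α by ring, binEnt_symm]


/-- For any Boolean function `b` and any single coordinate `Y_i`,
`I(b(Xⁿ); Y_i) ≤ 1 - H(α)`; more generally `∑ i, I(b(Xⁿ); Y_i) ≤ 1 - H(α)`. -/
theorem single_coordinate_bound (n : ℕ) (α : ℝ) (hα : α ∈ Set.Icc (0:ℝ) (1/2))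
    (b : (Fin n → Bool) → Bool) :
    (∀ i : Fin n, MIi n α b i ≤ 1 - binEnt α) ∧
      (∑ i : Fin n, MIi n α b i ≤ 1 - binEnt α) := by
  obtain ⟨hα0, hα2⟩ := hα
  have hα1 : α ≤ 1 := by linarith
  have hρ2 : -1 ≤ 1-2*α := by linarith
  have hρ1 : 1-2*α ≤ 1 := by linarith
  have hGnn : 0 ≤ Gf (1-2*α) := Gf_nonneg hρ2 hρ1
  have sumU : ∀ u : Bool, ∑ i : Fin n,
      (f2 (pB n b u) + pB n b u
        - f2 (pBYi n α b i u false) - f2 (pBYi n α b i u true))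
      ≤ Gf (1-2*α) * (1 - pB n b u) := by
    intro u
    rcases eq_or_ne (pB n b u) 0 with hp | hp
    · have hb : ∀ i ∈ (univ : Finset (Fin n)),
          f2 (pB n b u) + pB n b u
            - f2 (pBYi n α b i u false) - f2 (pBYi n α b i u true) ≤ 0 := by
        intro i _
        have := (T_props n α b hα0 hα2 u i).2
        rwa [if_pos hp] at this
      calc _ ≤ ∑ _i : Fin n, (0:ℝ) := Finset.sum_le_sum hb
        _ = 0 := Finset.sum_const_zero
        _ ≤ Gf (1-2*α) * (1 - pB n b u) := by
            rw [hp]; norm_num; exact hGnn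
    · have hppos : 0 < pB n b u := lt_of_le_of_ne (pB_nonneg n b u) (Ne.symm hp)
      calc _ ≤ ∑ i : Fin n, Gf (1-2*α) * ((2 * Av n b u i - pB n b u)^2 / pB n b u) := by
            apply Finset.sum_le_sum
            intro i _
            have := (T_props n α b hα0 hα2 u i).2
            rwa [if_neg hp] at this
        _ = (Gf (1-2*α) / pB n b u) * ∑ i : Fin n, (2 * Av n b u i - pB n b u)^2 := by
            rw [Finset.mul_sum]
            exact Finset.sum_congr rfl fun i _ => by ring
        _ ≤ (Gf (1-2*α) / pB n b u) * (pB n b u * (1 - pB n b u)) :=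
            mul_le_mul_of_nonneg_left (parseval n b u) (div_nonneg hGnn hppos.le)
        _ = Gf (1-2*α) * (1 - pB n b u) := by
            field_simp
  have part2 : ∑ i : Fin n, MIi n α b i ≤ 1 - binEnt α := by
    rw [Finset.sum_congr rfl (fun i _ => MIi_eq n α b i hα0 hα1),
      Finset.sum_add_distrib]
    have h1 := sumU false
    have h2 := sumU true
    have hps := pB_sum n b
    have key : Gf (1-2*α) * (1 - pB n b false) + Gf (1-2*α) * (1 - pB n b true)
        = Gf (1-2*α) := by
      linear_combination (-(Gf (1-2*α))) * hps
    rw [← Gf_rho α]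
    linarith
  have hMI_nonneg : ∀ j : Fin n, 0 ≤ MIi n α b j := by
    intro j
    rw [MIi_eq n α b j hα0 hα1]
    have a1 := (T_props n α b hα0 hα2 false j).1
    have a2 := (T_props n α b hα0 hα2 true j).1
    linarith
  refine ⟨fun i => le_trans ?_ part2, part2⟩
  exact Finset.single_le_sum (fun j _ => hMI_nonneg j) (Finset.mem_univ i)
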